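/- Lower bound statement: if for every n ≥ 2 there exists an ID-based deterministic algorithm with f(n)-bit registers that, on the n-ring with any injective ID assignment from [n^c] (c > 1 fixed), solves some non-homogeneous problem under the synchronous (distributed) scheduler from every initial configuration, then there exists a constant K > 0 and infinitely many n with f(n) ≥ K · log log n. -/

import Mathlib

open Filter

lemma iterate_const_exists {X S : Type*} (F : (X → S) → (X → S))
    (h : ∀ s : S, ∃ s', F (fun _ => s) = fun _ => s') (s₀ : S) :
    ∀ t : ℕ, ∃ s, F^[t] (fun _ => s₀) = fun _ => s := by
  intro t
  induction t with
  | zero => exact ⟨s₀, rfl⟩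
  | succ t ih =>
    obtain ⟨s, hs⟩ := ih
    obtain ⟨s', hs'⟩ := h s
    exact ⟨s', by rw [Function.iterate_succ_apply', hs, hs']⟩

theorem space_lower_bound (c : ℝ) (hc : 1 < c) (f : ℕ → ℕ)
    (hsolve : ∀ n : ℕ, 2 ≤ n →
      ∃ A : Fin ⌈(n : ℝ) ^ c⌉₊ →
          ((Fin (f n) → Bool) × (Fin (f n) → Bool) × (Fin (f n) → Bool)) →
          (Fin (f n) → Bool),
      ∃ legal : Set (ZMod n → (Fin (f n) → Bool)),
        (∀ γ ∈ legal, ¬ ∃ s, ∀ k, γ k = s) ∧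
        ∀ id : ZMod n → Fin ⌈(n : ℝ) ^ c⌉₊, Function.Injective id →
          ∀ γ₀ : ZMod n → (Fin (f n) → Bool),
            ∃ T : ℕ, ∀ t, T ≤ t →
              (fun γ k => A (id k) (γ k, γ (k - 1), γ (k + 1)))^[t] γ₀ ∈ legal) :
    ∃ K : ℝ, 0 < K ∧ ∀ N : ℕ, ∃ n : ℕ, N ≤ n ∧
      (f n : ℝ) ≥ K * Real.log (Real.log n) := by
  classical
  have key : ∀ n : ℕ, 2 ≤ n →
      ⌈(n : ℝ) ^ c⌉₊ ≤ 2 ^ (f n * 2 ^ (3 * f n)) * (n - 1) := by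
    intro n hn
    obtain ⟨A, legal, hne, hexec⟩ := hsolve n hn
    by_contra hlt
    push_neg at hlt
    have hcard : Fintype.card
        (((Fin (f n) → Bool) × (Fin (f n) → Bool) × (Fin (f n) → Bool)) →
          (Fin (f n) → Bool)) = 2 ^ (f n * 2 ^ (3 * f n)) := by
      have hS : Fintype.card (Fin (f n) → Bool) = 2 ^ (f n) := by
        simp [Fintype.card_fun]
      have hexp : (2:ℕ)^(f n) * ((2:ℕ)^(f n) * (2:ℕ)^(f n)) = 2 ^ (3 * f n) := by
        rw [← pow_add, ← pow_add]
        congr 1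
        omega
      rw [Fintype.card_fun, Fintype.card_prod, Fintype.card_prod, hS, hexp,
        ← pow_mul]
    have hlt' : Fintype.card
        (((Fin (f n) → Bool) × (Fin (f n) → Bool) × (Fin (f n) → Bool)) →
          (Fin (f n) → Bool)) * (n - 1)
        < Fintype.card (Fin ⌈(n : ℝ) ^ c⌉₊) := by
      rw [hcard, Fintype.card_fin]; exact hlt
    obtain ⟨δ, hδ⟩ := Fintype.exists_lt_card_fiber_of_mul_lt_card (f := A) hlt'
    set Tset : Finset (Fin ⌈(n : ℝ) ^ c⌉₊) := {x | A x = δ} with hTset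
    haveI : NeZero n := ⟨by omega⟩
    have hcardZ : Fintype.card (ZMod n) ≤ Fintype.card {x // x ∈ Tset} := by
      rw [ZMod.card, Fintype.card_coe]
      omega
    obtain ⟨e⟩ := Function.Embedding.nonempty_of_card_le hcardZ
    have hinj : Function.Injective (fun k : ZMod n => ((e k : {x // x ∈ Tset}) : Fin ⌈(n : ℝ) ^ c⌉₊)) :=
      Subtype.val_injective.comp e.injective
    have hA : ∀ k : ZMod n, A (e k : {x // x ∈ Tset}) = δ := by
      intro k
      have h1 : (e k : {x // x ∈ Tset}).1 ∈ Finset.filter (fun x => A x = δ)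
          Finset.univ := (e k).2
      exact (Finset.mem_filter.mp h1).2
    obtain ⟨T, hT⟩ := hexec _ hinj (fun _ _ => false)
    have hmem := hT T le_rfl
    obtain ⟨s, hs⟩ := iterate_const_exists
      (fun γ (k : ZMod n) => A (e k : {x // x ∈ Tset}) (γ k, γ (k - 1), γ (k + 1)))
      (fun s => ⟨δ (s, s, s), by funext k; simp [hA]⟩) (fun _ => false) T
    exact hne _ hmem ⟨s, fun k => by rw [hs]⟩
  -- Analytic step
  have hlog2 : (0 : ℝ) < Real.log 2 := Real.log_pos (by norm_num)
  refine ⟨1 / (8 * Real.log 2), by positivity, ?_⟩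
  intro N
  have htend : Tendsto (fun n : ℕ => Real.log (Real.log n)) atTop atTop :=
    Real.tendsto_log_atTop.comp (Real.tendsto_log_atTop.comp
      tendsto_natCast_atTop_atTop)
  obtain ⟨n, hB, hN⟩ :=
    ((htend.eventually_ge_atTop (max 1 (-2 * Real.log (c - 1)))).and
      (eventually_ge_atTop (max N 2))).exists
  have hn2 : 2 ≤ n := le_trans (le_max_right N 2) hN
  refine ⟨n, le_trans (le_max_left N 2) hN, ?_⟩
  have hc1 : (0 : ℝ) < c - 1 := by linarith
  have hnpos : (0 : ℝ) < n := by positivity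
  have hn2' : (2 : ℝ) ≤ n := by exact_mod_cast hn2
  have hlogn : (0 : ℝ) < Real.log n :=
    Real.log_pos (by linarith)
  -- from key: n^c ≤ 2^E * n  where E = f n * 2^(3 f n)
  have h1 : (n : ℝ) ^ c ≤ (2 : ℝ) ^ (f n * 2 ^ (3 * f n)) * n := by
    calc (n : ℝ) ^ c ≤ (⌈(n : ℝ) ^ c⌉₊ : ℝ) := Nat.le_ceil _
    _ ≤ ((2 ^ (f n * 2 ^ (3 * f n)) * (n - 1) : ℕ) : ℝ) := by
        exact_mod_cast key n hn2
    _ ≤ (2 : ℝ) ^ (f n * 2 ^ (3 * f n)) * n := by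
        push_cast
        have : ((n - 1 : ℕ) : ℝ) ≤ (n : ℝ) := by
          have := Nat.sub_le n 1; exact_mod_cast this
        nlinarith [pow_pos (by norm_num : (0:ℝ) < 2) (f n * 2 ^ (3 * f n))]
  have h2 : (n : ℝ) ^ (c - 1) ≤ (2 : ℝ) ^ (f n * 2 ^ (3 * f n)) := by
    rw [Real.rpow_sub hnpos, Real.rpow_one, div_le_iff₀ hnpos]
    exact h1
  have h3 : (c - 1) * Real.log n ≤ (f n * 2 ^ (3 * f n) : ℕ) * Real.log 2 := by
    have := Real.log_le_log (Real.rpow_pos_of_pos hnpos _) h2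
    rw [Real.log_rpow hnpos] at this
    rw [Real.log_pow] at this
    exact_mod_cast this
  -- f n ≥ 1
  have hf1 : 1 ≤ f n := by
    by_contra h
    have hf0 : f n = 0 := by omega
    rw [hf0] at h3
    simp at h3
    nlinarith
  -- E ≤ 2^(4 f n)
  have hE : (f n * 2 ^ (3 * f n) : ℕ) ≤ 2 ^ (4 * f n) := by
    have h4 : f n ≤ 2 ^ (f n) := Nat.le_of_lt Nat.lt_two_pow_self
    calc f n * 2 ^ (3 * f n) ≤ 2 ^ (f n) * 2 ^ (3 * f n) :=
          Nat.mul_le_mul_right _ h4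
    _ = 2 ^ (4 * f n) := by rw [← pow_add]; congr 1; omega
  have h5 : (c - 1) * Real.log n ≤ (2 : ℝ) ^ (4 * f n) * Real.log 2 := by
    refine h3.trans ?_
    have : ((f n * 2 ^ (3 * f n) : ℕ) : ℝ) ≤ ((2 ^ (4 * f n) : ℕ) : ℝ) := by
      exact_mod_cast hE
    push_cast at this ⊢
    nlinarith
  -- take logs
  have hLpos : (0 : ℝ) < (c - 1) * Real.log n := by positivity
  have h6 := Real.log_le_log hLpos h5
  rw [Real.log_mul (ne_of_gt hc1) (ne_of_gt hlogn)] at h6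
  rw [Real.log_mul (by positivity) (ne_of_gt hlog2), Real.log_pow] at h6
  have hloglog2 : Real.log (Real.log 2) < 0 :=
    Real.log_neg hlog2 (by
      have := Real.log_lt_sub_one_of_pos (by norm_num : (0:ℝ) < 2) (by norm_num)
      linarith)
  have h7 : Real.log (c - 1) + Real.log (Real.log n)
      ≤ (4 * f n : ℝ) * Real.log 2 := by
    push_cast at h6
    linarith
  have hB1 : (1 : ℝ) ≤ Real.log (Real.log n) := le_trans (le_max_left _ _) hB
  have hB2 : -2 * Real.log (c - 1) ≤ Real.log (Real.log n) :=
    le_trans (le_max_right _ _) hB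
  have h8 : (1 / 2 : ℝ) * Real.log (Real.log n) ≤ (4 * f n : ℝ) * Real.log 2 := by
    nlinarith
  rw [ge_iff_le, div_mul_eq_mul_div, div_le_iff₀ (by positivity)]
  nlinarith
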